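/- Consider φ'' = (Fl₁ sin φ - k₁φ)/C with C > 0, k₁ > 0 and any F ∈ ℝ. Then every solution is bounded and, moreover, the energy E = (φ')²/2 + (k₁φ²/2 + Fl₁ cos φ)/C is constant along solutions and its level sets are compact; for all sufficiently large energy values the level set is a single closed curve symmetric under (φ, φ') ↦ (-φ, -φ') and under (φ, φ') ↦ (φ, -φ'), on which φ assumes the value 0. -/

import Mathlib

/-- The energy of the system `φ'' = (Fl₁ sin φ - k₁φ)/C`. -/
noncomputable def En (F l1 k1 C : ℝ) (p : ℝ × ℝ) : ℝ :=
  p.2 ^ 2 / 2 + (k1 * p.1 ^ 2 / 2 + F * l1 * Real.cos p.1) / C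


noncomputable def H2 : (ℝ × ℝ) ≃ₜ EuclideanSpace ℝ (Fin 2) :=
  (Homeomorph.piFinTwo fun _ => ℝ).symm.trans (EuclideanSpace.equiv (Fin 2) ℝ).toHomeomorph.symm

lemma H2_apply_zero (p : ℝ × ℝ) : (H2 p) 0 = p.1 := by
  simp [H2, Homeomorph.piFinTwo, EuclideanSpace.equiv]
lemma H2_apply_one (p : ℝ × ℝ) : (H2 p) 1 = p.2 := by
  simp [H2, Homeomorph.piFinTwo, EuclideanSpace.equiv]
lemma H2_norm (p : ℝ × ℝ) : ‖H2 p‖ = Real.sqrt (p.1^2 + p.2^2) := by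
  rw [EuclideanSpace.norm_eq]
  simp [Fin.sum_univ_two, H2, Homeomorph.piFinTwo, EuclideanSpace.equiv, sq_abs]

lemma rsign_mul_abs (v : ℝ) : Real.sign v * |v| = v := by
  rcases lt_trichotomy v 0 with h|h|h
  · rw [Real.sign_of_neg h, abs_of_neg h]; ring
  · simp [h]
  · rw [Real.sign_of_pos h, abs_of_pos h]; ring

lemma rsign_abs_le_one (v : ℝ) : |Real.sign v| ≤ 1 := by
  rcases lt_trichotomy v 0 with h|h|h
  · rw [Real.sign_of_neg h]; norm_num
  · simp [h]
  · rw [Real.sign_of_pos h]; norm_num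

lemma rsign_mul_pos (v c : ℝ) (hc : 0 < c) : Real.sign (Real.sign v * c) = Real.sign v := by
  rcases lt_trichotomy v 0 with h|h|h
  · rw [Real.sign_of_neg h, Real.sign_of_neg (by linarith [neg_one_mul c])]
  · simp [h]
  · rw [Real.sign_of_pos h, Real.sign_of_pos (by linarith [one_mul c])]

lemma homeo_circle (g : ℝ → ℝ) (hg : Continuous g) (hge : ∀ x, g (-x) = g x)
    (r : ℝ) (hr : 0 < r)
    (hpos : ∀ x, 0 ≤ x → x < r → 0 < g x) (hzero : g r = 0)
    (hneg : ∀ x, r < x → g x < 0)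
    (hcpt : IsCompact {p : ℝ × ℝ | p.2 ^ 2 = 2 * g p.1}) :
    Nonempty ({p : ℝ × ℝ | p.2 ^ 2 = 2 * g p.1} ≃ₜ
      Metric.sphere (0 : EuclideanSpace ℝ (Fin 2)) 1) := by
  set S := {p : ℝ × ℝ | p.2 ^ 2 = 2 * g p.1} with hS
  have gabs : ∀ x, g x = g |x| := by
    intro x
    rcases abs_choice x with h|h
    · rw [h]
    · rw [h, hge]
  have habs_lt : ∀ x : ℝ, 0 < g x → |x| < r := by
    intro x hx
    by_contra hle
    push_neg at hle
    rcases eq_or_lt_of_le hle with h|h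
    · rw [gabs x, ← h, hzero] at hx; exact lt_irrefl 0 hx
    · have := hneg _ h; rw [gabs x] at hx; linarith
  have hg_pos_of_lt : ∀ x : ℝ, |x| < r → 0 < g x := by
    intro x hx
    rw [gabs x]
    exact hpos _ (abs_nonneg x) hx
  have hg_zero_abs : ∀ x : ℝ, g x = 0 → |x| = r := by
    intro x hx
    rcases lt_trichotomy |x| r with h|h|h
    · have := hg_pos_of_lt x h; linarith
    · exact h
    · have := hneg _ h; rw [gabs x] at hx; linarith
  have hg_abs_r : g r = 0 ∧ g (-r) = 0 := ⟨hzero, by rw [hge]; exact hzero⟩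
  have memS : ∀ p : ℝ × ℝ, p ∈ S ↔ p.2^2 = 2 * g p.1 := fun p => Iff.rfl
  -- facts on S
  have hSv : ∀ p : ℝ × ℝ, p ∈ S → p.2 ≠ 0 → |p.1| < r := by
    intro p hp hv
    rw [memS] at hp
    apply habs_lt
    nlinarith [sq_abs p.2, abs_pos.mpr hv]
  have hSv0 : ∀ p : ℝ × ℝ, p ∈ S → p.2 = 0 → |p.1| = r := by
    intro p hp hv
    rw [memS, hv] at hp
    exact hg_zero_abs _ (by linarith)
  set a : ℝ × ℝ → ℝ := fun p => p.1 / r with ha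
  set b : ℝ × ℝ → ℝ := fun p => Real.sign p.2 * Real.sqrt (1 - (p.1/r)^2) with hb
  have ha2_lt : ∀ p : ℝ × ℝ, |p.1| < r → (a p)^2 < 1 := by
    intro p h
    rw [ha]; simp only
    rw [div_pow, div_lt_one (by positivity), ← sq_abs]
    exact pow_lt_pow_left₀ h (abs_nonneg _) (by norm_num)
  have ha2_eq : ∀ p : ℝ × ℝ, |p.1| = r → (a p)^2 = 1 := by
    intro p h
    rw [ha]; simp only
    rw [div_pow, ← sq_abs, h]
    field_simp
  have hfwd : ∀ p ∈ S, (a p)^2 + (b p)^2 = 1 := by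
    intro p hp
    rcases eq_or_ne p.2 0 with hv|hv
    · have ha2 := ha2_eq p (hSv0 p hp hv)
      rw [hb]; simp only [hv, Real.sign_zero, zero_mul]
      rw [ha2]; ring
    · have hlt := hSv p hp hv
      have h1 := ha2_lt p hlt
      have hsign : (Real.sign p.2)^2 = 1 := by
        rcases lt_or_gt_of_ne hv with h|h
        · rw [Real.sign_of_neg h]; norm_num
        · rw [Real.sign_of_pos h]; norm_num
      rw [hb]; simp only
      rw [mul_pow, hsign, one_mul, Real.sq_sqrt (by linarith)]
      ring
  -- norm characterization on the sphere
  have hnorm_iff : ∀ q : EuclideanSpace ℝ (Fin 2), ‖q‖ = 1 ↔ (q 0)^2 + (q 1)^2 = 1 := by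
    intro q
    have h0 : H2 (H2.symm q) = q := H2.apply_symm_apply q
    have h0' : (H2.symm q).1 = q 0 := by rw [← H2_apply_zero (H2.symm q), h0]
    have h1' : (H2.symm q).2 = q 1 := by rw [← H2_apply_one (H2.symm q), h0]
    have hn : ‖q‖ = Real.sqrt ((q 0)^2 + (q 1)^2) := by
      conv_lhs => rw [← h0]
      rw [H2_norm, h0', h1']
    rw [hn, Real.sqrt_eq_one]
  -- backward map data
  have hbwd : ∀ q : EuclideanSpace ℝ (Fin 2), (q 0)^2 + (q 1)^2 = 1 →
      (Real.sign (q 1) * Real.sqrt (2 * g (r * q 0)))^2 = 2 * g (r * q 0) := by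
    intro q hq
    rcases eq_or_ne (q 1) 0 with h1|h1
    · rw [h1, Real.sign_zero, zero_mul]
      have : (q 0)^2 = 1 := by rw [h1] at hq; linarith [hq]
      have habs : |r * q 0| = r := by
        rw [abs_mul, abs_of_pos hr, ← sq_abs] at *
        nlinarith [abs_nonneg (q 0), sq_abs (q 0)]
      have : g (r * q 0) = 0 := by
        rw [gabs, habs, hzero]
      rw [this]; ring
    · have hq0 : (q 0)^2 < 1 := by nlinarith [sq_abs (q 1), abs_pos.mpr h1]
      have habs : |r * q 0| < r := by
        rw [abs_mul, abs_of_pos hr]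
        nlinarith [abs_nonneg (q 0), sq_abs (q 0)]
      have hgpos := hg_pos_of_lt _ habs
      have hsign : (Real.sign (q 1))^2 = 1 := by
        rcases lt_or_gt_of_ne h1 with h|h
        · rw [Real.sign_of_neg h]; norm_num
        · rw [Real.sign_of_pos h]; norm_num
      rw [mul_pow, hsign, one_mul, Real.sq_sqrt (by linarith)]
  -- the equivalence
  set fwd : S → Metric.sphere (0 : EuclideanSpace ℝ (Fin 2)) 1 :=
    fun s => ⟨H2 (a s.1, b s.1), by
      rw [mem_sphere_zero_iff_norm, hnorm_iff, H2_apply_zero, H2_apply_one]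
      exact hfwd s.1 s.2⟩ with hfwddef
  set bwd : Metric.sphere (0 : EuclideanSpace ℝ (Fin 2)) 1 → S :=
    fun q => ⟨(r * q.1 0, Real.sign (q.1 1) * Real.sqrt (2 * g (r * q.1 0))), by
      rw [memS]
      exact hbwd q.1 ((hnorm_iff q.1).mp (mem_sphere_zero_iff_norm.mp q.2))⟩ with hbwddef
  have hleft : ∀ s : S, bwd (fwd s) = s := by
    intro ⟨p, hp⟩
    apply Subtype.ext
    simp only [hfwddef, hbwddef, H2_apply_zero, H2_apply_one]
    have hx : r * a p = p.1 := by rw [ha]; field_simp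
    have hsq : Real.sqrt (2 * g (r * a p)) = |p.2| := by
      rw [hx, ← hp, Real.sqrt_sq_eq_abs]
    rcases eq_or_ne p.2 0 with hv|hv
    · have hb0 : b p = 0 := by rw [hb]; simp [hv]
      ext
      · simp only; rw [hx]
      · simp only; rw [hb0, Real.sign_zero, zero_mul, ← hv]
    · have hlt := hSv p hp hv
      have h1 := ha2_lt p hlt
      have hpos' : 0 < Real.sqrt (1 - (p.1/r)^2) := Real.sqrt_pos.mpr (by rw [ha] at h1; simp only at h1; linarith)
      have hsb : Real.sign (b p) = Real.sign p.2 := by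
        rw [hb]; exact rsign_mul_pos _ _ hpos'
      ext
      · simp only; rw [hx]
      · simp only; rw [hsb, hsq, rsign_mul_abs]
  have hright : ∀ q : Metric.sphere (0 : EuclideanSpace ℝ (Fin 2)) 1, fwd (bwd q) = q := by
    intro ⟨q, hq⟩
    apply Subtype.ext
    have hq' : (q 0)^2 + (q 1)^2 = 1 := (hnorm_iff q).mp (mem_sphere_zero_iff_norm.mp hq)
    simp only [hfwddef, hbwddef]
    have key : (a (r * q 0, Real.sign (q 1) * Real.sqrt (2 * g (r * q 0))),
        b (r * q 0, Real.sign (q 1) * Real.sqrt (2 * g (r * q 0)))) = (q 0, q 1) := by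
      have hax : a (r * q 0, Real.sign (q 1) * Real.sqrt (2 * g (r * q 0))) = q 0 := by
        rw [ha]; simp only; field_simp
      have h1mq : Real.sqrt (1 - (r * q 0 / r)^2) = |q 1| := by
        have : r * q 0 / r = q 0 := by field_simp
        rw [this]
        have : 1 - (q 0)^2 = (q 1)^2 := by linarith
        rw [this, Real.sqrt_sq_eq_abs]
      rcases eq_or_ne (q 1) 0 with h1|h1
      · have : b (r * q 0, Real.sign (q 1) * Real.sqrt (2 * g (r * q 0))) = 0 := by
          rw [hb]; simp only [h1, Real.sign_zero, zero_mul, Real.sign_zero, zero_mul]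
        rw [hax, this, h1]
      · have hq0 : (q 0)^2 < 1 := by nlinarith [sq_abs (q 1), abs_pos.mpr h1]
        have habs : |r * q 0| < r := by
          rw [abs_mul, abs_of_pos hr]
          nlinarith [abs_nonneg (q 0), sq_abs (q 0)]
        have hgpos := hg_pos_of_lt _ habs
        have hsqpos : 0 < Real.sqrt (2 * g (r * q 0)) := Real.sqrt_pos.mpr (by linarith)
        have hbv : b (r * q 0, Real.sign (q 1) * Real.sqrt (2 * g (r * q 0))) = q 1 := by
          rw [hb]; simp only
          rw [rsign_mul_pos _ _ hsqpos, h1mq, rsign_mul_abs]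
        rw [hax, hbv]
      -- close the pair equality
    rw [key]
    have := H2.apply_symm_apply q
    have hsymm : H2.symm q = (q 0, q 1) := by
      have h0 := H2_apply_zero (H2.symm q)
      have h1 := H2_apply_one (H2.symm q)
      rw [this] at h0 h1
      ext
      · exact h0
      · exact h1
    rw [← hsymm, this]
  -- continuity of fwd
  haveI : CompactSpace S := isCompact_iff_compactSpace.mp hcpt
  have hconta : Continuous fun s : S => a s.1 :=
    (continuous_fst.div_const r).comp continuous_subtype_val
  have hcontsq : Continuous fun s : S => Real.sqrt (1 - ((s.1).1/r)^2) := by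
    apply Real.continuous_sqrt.comp
    apply Continuous.sub continuous_const
    exact ((continuous_fst.div_const r).pow 2).comp continuous_subtype_val
  have hcontb : Continuous fun s : S => b s.1 := by
    rw [continuous_iff_continuousAt]
    intro s₀
    rcases lt_trichotomy (s₀.1).2 0 with hv|hv|hv
    · -- locally sign = -1
      have hev : (fun s : S => b s.1) =ᶠ[nhds s₀] (fun s : S => -Real.sqrt (1 - ((s.1).1/r)^2)) := by
        have : ∀ᶠ s : S in nhds s₀, (s.1).2 < 0 := by
          have hc : Continuous fun s : S => (s.1).2 := continuous_snd.comp continuous_subtype_val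
          exact (hc.continuousAt).eventually_lt continuousAt_const hv
        filter_upwards [this] with s hs
        rw [hb]; simp only [Real.sign_of_neg hs]; ring
      exact ContinuousAt.congr (hcontsq.continuousAt.neg) hev.symm
    · -- v₀ = 0 : squeeze
      have hb0 : b s₀.1 = 0 := by rw [hb]; simp [hv]
      rw [ContinuousAt, hb0]
      apply squeeze_zero_norm (a := fun s : S => Real.sqrt (1 - ((s.1).1/r)^2))
      · intro s
        rw [hb]
        rw [Real.norm_eq_abs, abs_mul]
        calc |Real.sign (s.1).2| * |Real.sqrt (1 - ((s.1).1/r)^2)|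
            ≤ 1 * |Real.sqrt (1 - ((s.1).1/r)^2)| := by
              apply mul_le_mul_of_nonneg_right (rsign_abs_le_one _) (abs_nonneg _)
          _ = Real.sqrt (1 - ((s.1).1/r)^2) := by
              rw [one_mul, abs_of_nonneg (Real.sqrt_nonneg _)]
      · have habs : |(s₀.1).1| = r := hSv0 s₀.1 s₀.2 hv
        have : Real.sqrt (1 - ((s₀.1).1/r)^2) = 0 := by
          have h2 : ((s₀.1).1/r)^2 = 1 := by
            rw [div_pow, ← sq_abs, habs]; field_simp
          rw [h2]; simp
        rw [← this]
        exact hcontsq.continuousAt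
    · have hev : (fun s : S => b s.1) =ᶠ[nhds s₀] (fun s : S => Real.sqrt (1 - ((s.1).1/r)^2)) := by
        have : ∀ᶠ s : S in nhds s₀, 0 < (s.1).2 := by
          have hc : Continuous fun s : S => (s.1).2 := continuous_snd.comp continuous_subtype_val
          exact continuousAt_const.eventually_lt hc.continuousAt hv
        filter_upwards [this] with s hs
        rw [hb]; simp only [Real.sign_of_pos hs]; ring
      exact ContinuousAt.congr hcontsq.continuousAt hev.symm
  have hcontfwd : Continuous fwd := by
    apply Continuous.subtype_mk
    exact H2.continuous.comp (hconta.prodMk hcontb)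
  exact ⟨Continuous.homeoOfEquivCompactToT2 (f := ⟨fwd, bwd, hleft, hright⟩) hcontfwd⟩


/-- Existence of the turning point `r` for high energy. -/
lemma exists_turning (F l1 k1 C : ℝ) (hC : 0 < C) (hk1 : 0 < k1) (h : ℝ)
    (hh : (k1 * (|F*l1|/k1 + 1)^2/2 + |F*l1|)/C < h) :
    ∃ r : ℝ, 0 < r ∧
      (∀ x, 0 ≤ x → x < r → 0 < h - (k1 * x^2/2 + F * l1 * Real.cos x)/C) ∧
      h - (k1 * r^2/2 + F * l1 * Real.cos r)/C = 0 ∧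
      (∀ x, r < x → h - (k1 * x^2/2 + F * l1 * Real.cos x)/C < 0) := by
  obtain ⟨A, hA⟩ : ∃ A, |F*l1| = A := ⟨_, rfl⟩
  rw [hA] at hh
  have hA0 : 0 ≤ A := hA ▸ abs_nonneg _
  obtain ⟨R, hR⟩ : ∃ R, A/k1 + 1 = R := ⟨_, rfl⟩
  rw [hR] at hh
  have hR0 : 0 < R := by rw [← hR]; positivity
  set g : ℝ → ℝ := fun x => h - (k1 * x^2/2 + F * l1 * Real.cos x)/C with hgdef
  have hgc : Continuous g := by fun_prop
  have hcosb : ∀ x : ℝ, |F * l1 * Real.cos x| ≤ A := by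
    intro x
    rw [← hA, abs_mul]
    nlinarith [Real.abs_cos_le_one x, abs_nonneg (F*l1)]
  -- g positive on |x| ≤ R
  have hgR : ∀ x : ℝ, |x| ≤ R → 0 < g x := by
    intro x hx
    have h1 : k1 * x^2/2 + F * l1 * Real.cos x ≤ k1 * R^2/2 + A := by
      have hx2 : x^2 ≤ R^2 := by nlinarith [sq_abs x, abs_nonneg x]
      have hm : k1 * x^2 ≤ k1 * R^2 := mul_le_mul_of_nonneg_left hx2 hk1.le
      have := le_trans (le_abs_self (F * l1 * Real.cos x)) (hcosb x)
      linarith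
    have h2 : (k1 * x^2/2 + F * l1 * Real.cos x)/C ≤ (k1 * R^2/2 + A)/C :=
      (div_le_div_iff_of_pos_right hC).mpr h1
    rw [hgdef]
    simp only
    linarith [hh]
  -- g strictly decreasing on Ici R
  have hderiv : ∀ x : ℝ, HasDerivAt g (-((k1 * x - F * l1 * Real.sin x)/C)) x := by
    intro x
    have h1 : HasDerivAt (fun x : ℝ => k1 * x^2/2 + F * l1 * Real.cos x)
        (k1 * x - F * l1 * Real.sin x) x := by
      have := (((hasDerivAt_pow 2 x).const_mul k1).div_const 2).add
        ((Real.hasDerivAt_cos x).const_mul (F*l1))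
      exact this.congr_deriv (by push_cast; ring)
    have := (h1.div_const C).const_sub h
    convert this using 1
  have hanti : StrictAntiOn g (Set.Ici R) := by
    apply strictAntiOn_of_deriv_neg (convex_Ici R) (hgc.continuousOn)
    intro x hx
    rw [interior_Ici] at hx
    rw [(hderiv x).deriv]
    have hsin : F * l1 * Real.sin x ≤ A := by
      refine le_trans (le_abs_self _) ?_
      rw [← hA, abs_mul]
      nlinarith [Real.abs_sin_le_one x, abs_nonneg (F*l1)]
    have : 0 < k1 * x - F * l1 * Real.sin x := by
      have : A < k1 * x := by
        have hRx : R < x := hx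
        rw [← hR] at hRx
        nlinarith [div_nonneg hA0 hk1.le, (div_lt_iff₀ hk1).mp (by linarith : A/k1 < x - 1)]
      linarith
    have := div_pos this hC
    linarith
  -- find X with g X < 0
  set X := max R (Real.sqrt (2*(|h| * C + A + 1)/k1)) with hX
  have hXR : R ≤ X := le_max_left _ _
  have hXsq : 2*(|h| * C + A + 1)/k1 ≤ X^2 := by
    have h1 : Real.sqrt (2*(|h| * C + A + 1)/k1) ≤ X := le_max_right _ _
    have h2 : (0:ℝ) ≤ 2*(|h| * C + A + 1)/k1 := by positivity
    calc 2*(|h| * C + A + 1)/k1 = Real.sqrt (2*(|h| * C + A + 1)/k1)^2 := (Real.sq_sqrt h2).symm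
      _ ≤ X^2 := by nlinarith [Real.sqrt_nonneg (2*(|h| * C + A + 1)/k1)]
  have hgX : g X < 0 := by
    have h1 : |h| * C + A + 1 ≤ k1 * X^2/2 := by
      rw [div_le_iff₀ hk1] at hXsq
      nlinarith
    have h2 : h * C + A < k1 * X^2/2 := by
      nlinarith [le_abs_self h, hC]
    have h3 : h * C < k1 * X^2/2 + F * l1 * Real.cos X := by
      nlinarith [hcosb X, neg_abs_le (F * l1 * Real.cos X)]
    rw [hgdef]
    simp only
    rw [sub_neg, lt_div_iff₀ hC]
    linarith
  have hgRpos : 0 < g R := hgR R (by rw [abs_of_pos hR0])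
  have hRX : R < X := by
    rcases eq_or_lt_of_le hXR with h'|h'
    · exfalso; rw [← h'] at hgX; linarith
    · exact h'
  -- IVT
  have hIVT := intermediate_value_Icc' (le_of_lt hRX) hgc.continuousOn
  have h0mem : (0:ℝ) ∈ Set.Icc (g X) (g R) := ⟨le_of_lt hgX, le_of_lt hgRpos⟩
  obtain ⟨r, hrmem, hgr⟩ := hIVT h0mem
  have hrR : R ≤ r := hrmem.1
  refine ⟨r, lt_of_lt_of_le hR0 hrR, ?_, hgr, ?_⟩
  · intro x hx0 hxr
    rcases le_or_gt x R with hxR|hxR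
    · exact hgR x (by rw [abs_of_nonneg hx0]; exact hxR)
    · have := hanti (le_of_lt hxR) hrR hxr
      rw [hgr] at this
      exact this
  · intro x hx
    have := hanti hrR (le_trans hrR (le_of_lt hx)) hx
    rw [hgr] at this
    exact this


lemma energy_const (F l1 k1 C : ℝ) (hC : 0 < C)
    (x v : ℝ → ℝ) (hx : ∀ t, HasDerivAt x (v t) t)
    (hv : ∀ t, HasDerivAt v ((F * l1 * Real.sin (x t) - k1 * x t) / C) t)
    (t s : ℝ) : En F l1 k1 C (x t, v t) = En F l1 k1 C (x s, v s) := by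
  set f : ℝ → ℝ := fun t => En F l1 k1 C (x t, v t) with hf
  have hd : ∀ t, HasDerivAt f 0 t := by
    intro t
    have h1 : HasDerivAt (fun t => (v t)^2/2)
        (v t * ((F * l1 * Real.sin (x t) - k1 * x t) / C)) t := by
      have := ((hv t).pow 2).div_const 2
      exact this.congr_deriv (by push_cast; ring)
    have h2 : HasDerivAt (fun t => (k1 * (x t)^2/2 + F * l1 * Real.cos (x t)) / C)
        ((k1 * (x t) * v t + F * l1 * (-Real.sin (x t) * v t)) / C) t := by
      have hc : HasDerivAt (fun t => Real.cos (x t)) (-Real.sin (x t) * v t) t :=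
        (Real.hasDerivAt_cos (x t)).comp t (hx t)
      have := ((((hx t).pow 2).const_mul k1).div_const 2 |>.add (hc.const_mul (F*l1))).div_const C
      exact this.congr_deriv (by push_cast; ring)
    have h3 := h1.add h2
    have : (fun t => (v t)^2/2 + (k1 * (x t)^2/2 + F * l1 * Real.cos (x t)) / C) = f := rfl
    change HasDerivAt f _ t at h3
    convert h3 using 1
    field_simp
    ring
  exact is_const_of_deriv_eq_zero (fun t => (hd t).differentiableAt) (fun t => (hd t).deriv) t s


lemma level_bound (F l1 k1 C : ℝ) (hC : 0 < C) (hk1 : 0 < k1) (h : ℝ) (p : ℝ × ℝ)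
    (hp : En F l1 k1 C p = h) :
    |p.1| ≤ Real.sqrt (max (2*(h*C + |F*l1|)/k1) (2*(h*C + |F*l1|)/C)) ∧
    |p.2| ≤ Real.sqrt (max (2*(h*C + |F*l1|)/k1) (2*(h*C + |F*l1|)/C)) := by
  have hcos : -|F*l1| ≤ F * l1 * Real.cos p.1 := by
    refine le_trans ?_ (neg_abs_le _)
    have : |F * l1 * Real.cos p.1| ≤ |F*l1| := by
      rw [abs_mul]
      nlinarith [Real.abs_cos_le_one p.1, abs_nonneg (F*l1)]
    linarith
  have hp' : p.2 ^ 2 / 2 * C + (k1 * p.1 ^ 2 / 2 + F * l1 * Real.cos p.1) = h * C := by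
    unfold En at hp
    field_simp at hp
    linarith
  have hx2 : p.1^2 ≤ 2*(h*C + |F*l1|)/k1 := by
    rw [le_div_iff₀ hk1]
    nlinarith [sq_nonneg p.2]
  have hv2 : p.2^2 ≤ 2*(h*C + |F*l1|)/C := by
    rw [le_div_iff₀ hC]
    nlinarith [sq_nonneg p.1]
  constructor
  · rw [← Real.sqrt_sq_eq_abs]
    exact Real.sqrt_le_sqrt (le_max_of_le_left hx2)
  · rw [← Real.sqrt_sq_eq_abs]
    exact Real.sqrt_le_sqrt (le_max_of_le_right hv2)

lemma level_compact (F l1 k1 C : ℝ) (hC : 0 < C) (hk1 : 0 < k1) (h : ℝ) :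
    IsCompact {p : ℝ × ℝ | En F l1 k1 C p = h} := by
  apply Metric.isCompact_of_isClosed_isBounded
  · have hcont : Continuous (En F l1 k1 C) := by unfold En; fun_prop
    exact isClosed_eq hcont continuous_const
  · rw [Metric.isBounded_iff_subset_closedBall 0]
    refine ⟨Real.sqrt (max (2*(h*C + |F*l1|)/k1) (2*(h*C + |F*l1|)/C)), ?_⟩
    intro p hp
    obtain ⟨h1, h2⟩ := level_bound F l1 k1 C hC hk1 h p hp
    rw [Metric.mem_closedBall, dist_zero_right, Prod.norm_def]
    simp only [Real.norm_eq_abs]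
    exact max_le h1 h2

/-- For `φ'' = (Fl₁ sin φ - k₁φ)/C` with `k₁ > 0`: every solution is bounded,
the energy is a first integral with compact level sets, and all sufficiently
high energy level sets are single closed curves, symmetric with respect to both
coordinate axes, on which `φ` attains the value `0`. -/

theorem proper_energy_high_level_sets
    (F l1 k1 C : ℝ) (hC : 0 < C) (hk1 : 0 < k1) :
    -- every solution is bounded
    (∀ x v : ℝ → ℝ, (∀ t, HasDerivAt x (v t) t) →
      (∀ t, HasDerivAt v ((F * l1 * Real.sin (x t) - k1 * x t) / C) t) →
      ∃ M : ℝ, ∀ t, |x t| ≤ M ∧ |v t| ≤ M) ∧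
    -- the energy is constant along solutions
    (∀ x v : ℝ → ℝ, (∀ t, HasDerivAt x (v t) t) →
      (∀ t, HasDerivAt v ((F * l1 * Real.sin (x t) - k1 * x t) / C) t) →
      ∀ t s : ℝ, En F l1 k1 C (x t, v t) = En F l1 k1 C (x s, v s)) ∧
    -- level sets of the energy are compact
    (∀ h : ℝ, IsCompact {p : ℝ × ℝ | En F l1 k1 C p = h}) ∧
    -- high level sets are single closed curves, symmetric, meeting {φ = 0}
    (∃ h₀ : ℝ, ∀ h : ℝ, h₀ < h →
      IsConnected {p : ℝ × ℝ | En F l1 k1 C p = h} ∧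
      Nonempty ({p : ℝ × ℝ | En F l1 k1 C p = h} ≃ₜ
        Metric.sphere (0 : EuclideanSpace ℝ (Fin 2)) 1) ∧
      (∀ p : ℝ × ℝ, En F l1 k1 C p = h → En F l1 k1 C (-p.1, -p.2) = h) ∧
      (∀ p : ℝ × ℝ, En F l1 k1 C p = h → En F l1 k1 C (p.1, -p.2) = h) ∧
      ∃ w : ℝ, En F l1 k1 C (0, w) = h) := by
  refine ⟨?_, energy_const F l1 k1 C hC, level_compact F l1 k1 C hC hk1, ?_⟩
  · -- boundedness of solutions
    intro x v hx hv
    set h := En F l1 k1 C (x 0, v 0) with hh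
    refine ⟨Real.sqrt (max (2*(h*C + |F*l1|)/k1) (2*(h*C + |F*l1|)/C)), fun t => ?_⟩
    have hc := energy_const F l1 k1 C hC x v hx hv t 0
    exact level_bound F l1 k1 C hC hk1 h (x t, v t) hc
  · -- high level sets
    refine ⟨(k1 * (|F*l1|/k1 + 1)^2/2 + |F*l1|)/C, fun h hh => ?_⟩
    obtain ⟨r, hr, hpos, hzero, hneg⟩ := exists_turning F l1 k1 C hC hk1 h hh
    set g : ℝ → ℝ := fun x => h - (k1 * x^2/2 + F * l1 * Real.cos x)/C with hgdef
    have hset : {p : ℝ × ℝ | En F l1 k1 C p = h} = {p : ℝ × ℝ | p.2 ^ 2 = 2 * g p.1} := by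
      ext p
      simp only [Set.mem_setOf_eq, hgdef]
      unfold En
      constructor <;> intro hp <;> linarith
    have hcpt := level_compact F l1 k1 C hC hk1 h
    rw [hset] at hcpt
    have hgeven : ∀ y : ℝ, g (-y) = g y := by
      intro y
      simp only [hgdef]
      have h1 : (-y)^2 = y^2 := by ring
      rw [h1, Real.cos_neg]
    obtain ⟨e⟩ := homeo_circle g (by rw [hgdef]; fun_prop) hgeven r hr hpos hzero hneg hcpt
    have hrank : 1 < Module.rank ℝ (EuclideanSpace ℝ (Fin 2)) := by
      have h2 : Module.finrank ℝ (EuclideanSpace ℝ (Fin 2)) = 2 := finrank_euclideanSpace_fin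
      rw [← Module.finrank_eq_rank ℝ, h2]
      norm_num
    have hsph : IsConnected (Metric.sphere (0 : EuclideanSpace ℝ (Fin 2)) 1) :=
      isConnected_sphere hrank 0 zero_le_one
    haveI := isConnected_iff_connectedSpace.mp hsph
    refine ⟨?_, ?_, ?_, ?_, ?_⟩
    · rw [hset, isConnected_iff_connectedSpace]
      exact e.symm.surjective.connectedSpace e.symm.continuous
    · rw [hset]
      exact ⟨e⟩
    · intro p hp
      have heq : En F l1 k1 C (-p.1, -p.2) = En F l1 k1 C p := by
        unfold En
        simp only
        rw [Real.cos_neg]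
        ring
      rw [heq]; exact hp
    · intro p hp
      have heq : En F l1 k1 C (p.1, -p.2) = En F l1 k1 C p := by
        unfold En
        simp only
        ring
      rw [heq]; exact hp
    · have hg0 : 0 < g 0 := hpos 0 le_rfl hr
      refine ⟨Real.sqrt (2 * g 0), ?_⟩
      unfold En
      simp only
      rw [Real.sq_sqrt (by linarith), hgdef]
      ring
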